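/- Let g be a finite-dimensional vector space and n ≥ 3. Inside S^n(g ⊕ g) ≅ ⊕_{a+b=n} S^a(g)⊗S^b(g), the intersection Ker(d⊗id) ∩ Ker(id⊗d) is zero, where d is the co-Hochschild coboundary of S(g). More precisely, Ker(d⊗id) ∩ Ker(id⊗d) = g⊗g ⊂ S²(g⊕g), which meets S^n(g⊕g) trivially for n ≥ 3. -/

import Mathlib

open TensorProduct MvPolynomial

/-- The cocommutative coproduct `Δ₀` of the symmetric Hopf algebra
`S(g) = K[X₁, …, X_n]`, with the variables primitive. -/
noncomputable def comul (K : Type*) [CommRing K] (n : ℕ) :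
    MvPolynomial (Fin n) K →ₐ[K]
      (MvPolynomial (Fin n) K ⊗[K] MvPolynomial (Fin n) K) :=
  aeval fun i => X i ⊗ₜ[K] 1 + 1 ⊗ₜ[K] X i

/-- The co-Hochschild coboundary `d(f) = Δ₀(f) − f⊗1 − 1⊗f`. -/
noncomputable def coHochschildD (K : Type*) [CommRing K] (n : ℕ) :
    MvPolynomial (Fin n) K →ₗ[K]
      (MvPolynomial (Fin n) K ⊗[K] MvPolynomial (Fin n) K) :=
  (comul K n).toLinearMap -
    (Algebra.TensorProduct.includeLeft :
      MvPolynomial (Fin n) K →ₐ[K]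
        MvPolynomial (Fin n) K ⊗[K] MvPolynomial (Fin n) K).toLinearMap -
    (Algebra.TensorProduct.includeRight :
      MvPolynomial (Fin n) K →ₐ[K]
        MvPolynomial (Fin n) K ⊗[K] MvPolynomial (Fin n) K).toLinearMap

/-- `d ⊗ id`, landing in `P ⊗ (P ⊗ P)`. -/
noncomputable def dTensorId (K : Type*) [CommRing K] (n : ℕ) :
    (MvPolynomial (Fin n) K ⊗[K] MvPolynomial (Fin n) K) →ₗ[K]
      (MvPolynomial (Fin n) K ⊗[K]
        (MvPolynomial (Fin n) K ⊗[K] MvPolynomial (Fin n) K)) :=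
  (TensorProduct.assoc K (MvPolynomial (Fin n) K) (MvPolynomial (Fin n) K)
      (MvPolynomial (Fin n) K)).toLinearMap ∘ₗ
    LinearMap.rTensor (MvPolynomial (Fin n) K) (coHochschildD K n)

/-- `id ⊗ d`, landing in `P ⊗ (P ⊗ P)`. -/
noncomputable def idTensorD (K : Type*) [CommRing K] (n : ℕ) :
    (MvPolynomial (Fin n) K ⊗[K] MvPolynomial (Fin n) K) →ₗ[K]
      (MvPolynomial (Fin n) K ⊗[K]
        (MvPolynomial (Fin n) K ⊗[K] MvPolynomial (Fin n) K)) :=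
  LinearMap.lTensor (MvPolynomial (Fin n) K) (coHochschildD K n)


/-- `g ⊗ g ⊂ S(g) ⊗ S(g)`, where `g` is the span of the variables. -/
noncomputable def gTensorG (K : Type*) [CommRing K] (n : ℕ) :
    Submodule K (MvPolynomial (Fin n) K ⊗[K] MvPolynomial (Fin n) K) :=
  Submodule.map₂ (TensorProduct.mk K (MvPolynomial (Fin n) K) (MvPolynomial (Fin n) K))
    (Submodule.span K (Set.range (X : Fin n → MvPolynomial (Fin n) K)))
    (Submodule.span K (Set.range (X : Fin n → MvPolynomial (Fin n) K)))

/-- The degree-`m` component `S^m(g ⊕ g) = ⊕_{a+b=m} S^a(g) ⊗ S^b(g)` of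
`S(g) ⊗ S(g)`. -/
noncomputable def degreeComponent2 (K : Type*) [CommRing K] (n : ℕ) (m : ℕ) :
    Submodule K (MvPolynomial (Fin n) K ⊗[K] MvPolynomial (Fin n) K) :=
  ⨆ (p : ℕ × ℕ) (_ : p.1 + p.2 = m),
    Submodule.map₂ (TensorProduct.mk K (MvPolynomial (Fin n) K) (MvPolynomial (Fin n) K))
      (homogeneousSubmodule (Fin n) K p.1) (homogeneousSubmodule (Fin n) K p.2)


section Aux

open TensorProduct MvPolynomial

variable (K : Type*) [CommRing K] (n : ℕ)

local notation "P" => MvPolynomial (Fin n) K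

/-- counit-on-right map `a ⊗ b ↦ a * b(0)`. -/
noncomputable def epsR : (P ⊗[K] P) →ₐ[K] P :=
  Algebra.TensorProduct.lift (AlgHom.id K _) (aeval fun _ => 0) (fun _ _ => Commute.all _ _)

@[simp] lemma epsR_tmul (a b : P) : epsR K n (a ⊗ₜ[K] b) = a * aeval (fun _ => 0) b := by
  simp [epsR]

/-- extraction of the coefficient of `X i` in the right factor. -/
noncomputable def psiR (i : Fin n) : (P ⊗[K] P) →ₗ[K] P :=
  (TensorProduct.rid K P).toLinearMap ∘ₗ
    LinearMap.lTensor P (lcoeff K (Finsupp.single i 1))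

@[simp] lemma psiR_tmul (i : Fin n) (a b : P) :
    psiR K n i (a ⊗ₜ[K] b) = coeff (Finsupp.single i 1) b • a := by
  simp [psiR]

lemma coeff_single_mul (i : Fin n) (p q : P) :
    coeff (Finsupp.single i 1) (p * q)
      = coeff 0 p * coeff (Finsupp.single i 1) q
        + coeff (Finsupp.single i 1) p * coeff 0 q := by
  rw [coeff_mul, Finsupp.antidiagonal_single, Finset.sum_map]
  rw [show (Finset.HasAntidiagonal.antidiagonal (1 : ℕ) : Finset (ℕ × ℕ)) = {(0,1),(1,0)} by decide]
  simp

lemma psiR_mul (i : Fin n) (u v : P ⊗[K] P) :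
    psiR K n i (u * v) = psiR K n i u * epsR K n v + epsR K n u * psiR K n i v := by
  induction u using TensorProduct.induction_on with
  | zero => simp
  | tmul a b =>
    induction v using TensorProduct.induction_on with
    | zero => simp
    | tmul c d =>
      simp only [Algebra.TensorProduct.tmul_mul_tmul, psiR_tmul, epsR_tmul,
        coeff_single_mul, aeval_zero', constantCoeff_eq, add_smul, Algebra.smul_def, map_mul,
        map_add]
      ring
    | add x y hx hy =>
      rw [mul_add, map_add, hx, hy, map_add, map_add]
      ring
  | add x y hx hy =>
    rw [add_mul, map_add, hx, hy, map_add, map_add]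
    ring

lemma epsR_comul (f : P) : epsR K n (comul K n f) = f := by
  have : (epsR K n).comp (comul K n) = AlgHom.id K P := by
    apply MvPolynomial.algHom_ext
    intro i
    simp [comul]
  exact congrArg (fun g => g f) (congrArg DFunLike.coe this)

/-- `ψᵢ ∘ Δ₀` as a derivation. -/
noncomputable def psiComul (i : Fin n) : Derivation K P P where
  toLinearMap := (psiR K n i) ∘ₗ (comul K n).toLinearMap
  map_one_eq_zero' := by
    simp [Algebra.TensorProduct.one_def, coeff_one, Finsupp.single_eq_zero, eq_comm]
  leibniz' := fun a b => by
    simp only [LinearMap.coe_comp, Function.comp_apply, AlgHom.toLinearMap_apply, map_mul,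
      psiR_mul, epsR_comul, smul_eq_mul]
    ring

lemma psiComul_eq_pderiv (i : Fin n) : psiComul K n i = pderiv i := by
  apply derivation_ext
  intro j
  show psiR K n i (comul K n (X j)) = _
  simp only [comul, aeval_X, map_add, psiR_tmul, coeff_one, pderiv_X, coeff_X']
  by_cases h : i = j
  · subst h
    simp [Finsupp.single_eq_zero, eq_comm]
  · have hne : ¬((Finsupp.single j 1 : Fin n →₀ ℕ) = Finsupp.single i 1) :=
      fun hh => h ((Finsupp.single_left_inj one_ne_zero).mp hh).symm
    rw [if_neg hne, Pi.single_eq_of_ne (Ne.symm h)]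
    simp [Finsupp.single_eq_zero, eq_comm]

lemma coeff_pderiv' (i : Fin n) (m : Fin n →₀ ℕ) (f : P) :
    coeff m (pderiv i f) = (m i + 1 : ℕ) * coeff (m + Finsupp.single i 1) f := by
  induction f using MvPolynomial.induction_on' with
  | monomial s a =>
    rw [pderiv_monomial, coeff_monomial, coeff_monomial]
    by_cases h : s = m + Finsupp.single i 1
    · subst h
      rw [if_pos, if_pos rfl]
      · push_cast
        simp [mul_comm]
      · simp
    · rw [if_neg h]
      by_cases h2 : s - Finsupp.single i 1 = m
      · rw [if_pos h2]
        by_cases h3 : s i = 0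
        · simp [h3]
        · exfalso
          apply h
          ext j
          by_cases hj : j = i
          · subst hj
            have := congrArg (fun g => g j) h2
            simp only [Finsupp.tsub_apply, Finsupp.single_eq_same] at this
            simp only [Finsupp.add_apply, Finsupp.single_eq_same]
            omega
          · have := congrArg (fun g => g j) h2
            simp only [Finsupp.tsub_apply, Finsupp.single_eq_of_ne hj] at this
            simp only [Finsupp.add_apply, Finsupp.single_eq_of_ne hj]
            omega
      · rw [if_neg h2, mul_zero]
  | add p q hp hq => simp [hp, hq, mul_add]

lemma coHochschildD_apply (f : P) :
    coHochschildD K n f = comul K n f - f ⊗ₜ[K] 1 - 1 ⊗ₜ[K] f := rfl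

lemma ker_coHochschildD (K : Type*) [Field K] [CharZero K] (n : ℕ) :
    LinearMap.ker (coHochschildD K n)
      = Submodule.span K (Set.range (X : Fin n → MvPolynomial (Fin n) K)) := by
  apply le_antisymm
  · intro f hf
    rw [LinearMap.mem_ker, coHochschildD_apply, sub_sub, sub_eq_zero] at hf
    -- constant coefficient vanishes
    have hc0 : coeff 0 f = 0 := by
      have := congrArg (epsR K n) hf
      rw [epsR_comul, map_add, epsR_tmul, epsR_tmul, aeval_zero', aeval_zero'] at this
      simp only [map_one, mul_one, one_mul, constantCoeff_eq] at this
      have h2 : algebraMap K (MvPolynomial (Fin n) K) (coeff 0 f) = 0 := by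
        nth_rewrite 1 [show f = f + 0 by ring] at this
        exact (add_left_cancel this).symm
      rw [MvPolynomial.algebraMap_eq] at h2
      exact (MvPolynomial.C_eq_zero).mp h2
    -- partial derivatives are the linear coefficients
    have hd : ∀ i : Fin n, pderiv i f
        = C (coeff (Finsupp.single i 1) f) := by
      intro i
      have h1 : psiR K n i (comul K n f) = pderiv i f := by
        have := congrArg (fun D : Derivation K (MvPolynomial (Fin n) K)
          (MvPolynomial (Fin n) K) => D f) (psiComul_eq_pderiv K n i)
        exact this
      have := congrArg (psiR K n i) hf
      rw [h1, map_add, psiR_tmul, psiR_tmul] at this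
      rw [this, coeff_one]
      rw [if_neg (by simp [eq_comm, Finsupp.single_eq_zero])]
      rw [zero_smul, zero_add, MvPolynomial.C_eq_smul_one]
    -- all other coefficients vanish
    have key : ∀ u : Fin n →₀ ℕ, (∀ i, u ≠ Finsupp.single i 1) → coeff u f = 0 := by
      intro u hu
      rcases eq_or_ne u 0 with rfl | h0
      · exact hc0
      obtain ⟨i, hi⟩ := Finsupp.ne_iff.mp h0
      simp only [Finsupp.coe_zero, Pi.zero_apply] at hi
      have hle : Finsupp.single i 1 ≤ u := Finsupp.single_le_iff.mpr (by omega)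
      have hsum : (u - Finsupp.single i 1) + Finsupp.single i 1 = u :=
        tsub_add_cancel_of_le hle
      have key2 := coeff_pderiv' K n i (u - Finsupp.single i 1) f
      rw [hd i, hsum, coeff_C] at key2
      rw [if_neg (by
        intro hzero
        exact hu i (by rw [← hsum, ← hzero, zero_add]))] at key2
      have harg : ((u - Finsupp.single i 1 : Fin n →₀ ℕ)) i + 1 = u i := by
        rw [Finsupp.tsub_apply, Finsupp.single_eq_same]
        omega
      rw [harg] at key2
      have : (u i : K) ≠ 0 := Nat.cast_ne_zero.mpr hi
      exact (mul_eq_zero.mp key2.symm).resolve_left this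
    -- conclude
    rw [MvPolynomial.as_sum f]
    apply Submodule.sum_mem
    intro v hv
    by_cases hsing : ∃ i, v = Finsupp.single i 1
    · obtain ⟨i, rfl⟩ := hsing
      have hmx : coeff (Finsupp.single i 1) f • (X i : MvPolynomial (Fin n) K)
          = monomial (Finsupp.single i 1) (coeff (Finsupp.single i 1) f) := by
        rw [show (X i : MvPolynomial (Fin n) K) = monomial (Finsupp.single i 1) 1 from rfl,
          smul_monomial, smul_eq_mul, mul_one]
      rw [← hmx]
      exact Submodule.smul_mem _ _ (Submodule.subset_span ⟨i, rfl⟩)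
    · push_neg at hsing
      exact absurd (key v hsing) (mem_support_iff.mp hv)
  · rw [Submodule.span_le]
    rintro _ ⟨i, rfl⟩
    simp only [SetLike.mem_coe, LinearMap.mem_ker, coHochschildD_apply, comul, aeval_X]
    ring

section RangeTensor

variable {R M N : Type*} [CommRing R] [AddCommGroup M] [AddCommGroup N]
  [Module R M] [Module R N]

lemma range_rTensor_subtype (G : Submodule R M) :
    LinearMap.range (LinearMap.rTensor N G.subtype)
      = Submodule.map₂ (TensorProduct.mk R M N) G ⊤ := by
  apply le_antisymm
  · rintro x ⟨y, rfl⟩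
    induction y using TensorProduct.induction_on with
    | zero => simp
    | tmul g q =>
      rw [LinearMap.rTensor_tmul]
      exact Submodule.apply_mem_map₂ _ g.2 trivial
    | add a b ha hb => rw [map_add]; exact add_mem ha hb
  · rw [Submodule.map₂_le]
    intro m hm q _
    exact ⟨(⟨m, hm⟩ : G) ⊗ₜ[R] q, rfl⟩

lemma range_lTensor_subtype (G : Submodule R N) :
    LinearMap.range (LinearMap.lTensor M G.subtype)
      = Submodule.map₂ (TensorProduct.mk R M N) ⊤ G := by
  apply le_antisymm
  · rintro x ⟨y, rfl⟩
    induction y using TensorProduct.induction_on with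
    | zero => simp
    | tmul q g =>
      rw [LinearMap.lTensor_tmul]
      exact Submodule.apply_mem_map₂ _ trivial g.2
    | add a b ha hb => rw [map_add]; exact add_mem ha hb
  · rw [Submodule.map₂_le]
    intro q _ m hm
    exact ⟨q ⊗ₜ[R] (⟨m, hm⟩ : G), rfl⟩

end RangeTensor

end Aux
section Aux2

open TensorProduct MvPolynomial

variable (K : Type*) [Field K] [CharZero K] (n : ℕ)

local notation "P" => MvPolynomial (Fin n) K
local notation "G" => Submodule.span K (Set.range (X : Fin n → MvPolynomial (Fin n) K))

lemma ker_dTensorId_eq :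
    LinearMap.ker (dTensorId K n)
      = Submodule.map₂ (TensorProduct.mk K P P) G ⊤ := by
  have hexact : Function.Exact (Submodule.subtype G) (coHochschildD K n) :=
    LinearMap.exact_iff.mpr (by rw [ker_coHochschildD, Submodule.range_subtype])
  have h1 : LinearMap.ker (dTensorId K n)
      = LinearMap.ker (LinearMap.rTensor P (coHochschildD K n)) := by
    unfold dTensorId
    rw [LinearMap.ker_comp, LinearEquiv.ker, Submodule.comap_bot]
  rw [h1, LinearMap.exact_iff.mp (Module.Flat.rTensor_exact P hexact),
    range_rTensor_subtype]

lemma ker_idTensorD_eq :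
    LinearMap.ker (idTensorD K n)
      = Submodule.map₂ (TensorProduct.mk K P P) ⊤ G := by
  have hexact : Function.Exact (Submodule.subtype G) (coHochschildD K n) :=
    LinearMap.exact_iff.mpr (by rw [ker_coHochschildD, Submodule.range_subtype])
  rw [show idTensorD K n = LinearMap.lTensor P (coHochschildD K n) from rfl,
    LinearMap.exact_iff.mp (Module.Flat.lTensor_exact P hexact),
    range_lTensor_subtype]

section BasisLemmas

variable {R₀ ι κ M N : Type*} [Field R₀] [AddCommGroup M] [AddCommGroup N]
  [Module R₀ M] [Module R₀ N]

lemma basis_span_inf (b : Module.Basis ι R₀ M) (s t : Set ι) :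
    (Submodule.span R₀ (b '' s)) ⊓ (Submodule.span R₀ (b '' t))
      = Submodule.span R₀ (b '' (s ∩ t)) := by
  ext x
  simp only [Submodule.mem_inf, Module.Basis.mem_span_image, Set.subset_inter_iff]

lemma map₂_span_basis (b : Module.Basis ι R₀ M) (c : Module.Basis κ R₀ N) (s : Set ι) (t : Set κ) :
    Submodule.map₂ (TensorProduct.mk R₀ M N)
        (Submodule.span R₀ (b '' s)) (Submodule.span R₀ (c '' t))
      = Submodule.span R₀ ((b.tensorProduct c) '' (s ×ˢ t)) := by
  rw [Submodule.map₂_span_span]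
  congr 1
  rw [Set.image2_image_left, Set.image2_image_right, ← Set.image_prod]
  apply Set.image_congr
  intro p _
  rw [Module.Basis.tensorProduct_apply]
  rfl

end BasisLemmas

end Aux2

section Aux3

open TensorProduct MvPolynomial

variable (K : Type*) [Field K] [CharZero K] (n : ℕ)

local notation "P" => MvPolynomial (Fin n) K

/-- The index set of the variables inside the monomial basis. -/
def singleSet : Set (Fin n →₀ ℕ) := Set.range (fun i : Fin n => Finsupp.single i (1 : ℕ))

lemma span_range_X_eq :
    Submodule.span K (Set.range (X : Fin n → MvPolynomial (Fin n) K))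
      = Submodule.span K (basisMonomials (Fin n) K '' singleSet n) := by
  congr 1
  rw [singleSet, ← Set.range_comp]
  congr 1

lemma top_eq_span_basis :
    (⊤ : Submodule K (MvPolynomial (Fin n) K))
      = Submodule.span K (basisMonomials (Fin n) K '' Set.univ) := by
  rw [Set.image_univ, Module.Basis.span_eq]

lemma homogeneousSubmodule_le_span (a : ℕ) :
    homogeneousSubmodule (Fin n) K a
      ≤ Submodule.span K (basisMonomials (Fin n) K ''
          {u : Fin n →₀ ℕ | Finsupp.weight (1 : Fin n → ℕ) u = a}) := by
  intro p hp
  rw [mem_homogeneousSubmodule] at hp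
  nth_rewrite 1 [MvPolynomial.as_sum p]
  apply Submodule.sum_mem
  intro v hv
  have hb : coeff v p • basisMonomials (Fin n) K v = monomial v (coeff v p) := by
    rw [coe_basisMonomials]
    rw [smul_monomial, smul_eq_mul, mul_one]
  rw [← hb]
  exact Submodule.smul_mem _ _ (Submodule.subset_span
    (Set.mem_image_of_mem _ (hp (mem_support_iff.mp hv))))

lemma weight_single_one {n : ℕ} (i : Fin n) :
    Finsupp.weight (1 : Fin n → ℕ) (Finsupp.single i 1) = 1 :=
  (isHomogeneous_X ℚ i) (show coeff (Finsupp.single i 1) (X i : MvPolynomial (Fin n) ℚ) ≠ 0 by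
    simp [coeff_X])

lemma degreeComponent2_le_span (m : ℕ) :
    degreeComponent2 K n m
      ≤ Submodule.span K (((basisMonomials (Fin n) K).tensorProduct
          (basisMonomials (Fin n) K)) ''
          {p : (Fin n →₀ ℕ) × (Fin n →₀ ℕ) |
            Finsupp.weight (1 : Fin n → ℕ) p.1 + Finsupp.weight (1 : Fin n → ℕ) p.2 = m}) := by
  rw [degreeComponent2]
  apply iSup_le
  intro p
  apply iSup_le
  intro hp
  calc Submodule.map₂ (TensorProduct.mk K P P)
        (homogeneousSubmodule (Fin n) K p.1) (homogeneousSubmodule (Fin n) K p.2)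
      ≤ Submodule.map₂ (TensorProduct.mk K P P)
        (Submodule.span K (basisMonomials (Fin n) K ''
          {u : Fin n →₀ ℕ | Finsupp.weight (1 : Fin n → ℕ) u = p.1}))
        (Submodule.span K (basisMonomials (Fin n) K ''
          {u : Fin n →₀ ℕ | Finsupp.weight (1 : Fin n → ℕ) u = p.2})) :=
      Submodule.map₂_le_map₂ (homogeneousSubmodule_le_span K n p.1)
        (homogeneousSubmodule_le_span K n p.2)
    _ = Submodule.span K (((basisMonomials (Fin n) K).tensorProduct
          (basisMonomials (Fin n) K)) ''
          ({u : Fin n →₀ ℕ | Finsupp.weight (1 : Fin n → ℕ) u = p.1} ×ˢ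
           {u : Fin n →₀ ℕ | Finsupp.weight (1 : Fin n → ℕ) u = p.2})) :=
      map₂_span_basis _ _ _ _
    _ ≤ _ := by
      apply Submodule.span_mono
      apply Set.image_mono
      rintro ⟨u, v⟩ ⟨hu, hv⟩
      simp only [Set.mem_setOf_eq] at hu hv ⊢
      rw [hu, hv, hp]

end Aux3

/-- Let `g` be a finite-dimensional vector space over a field `K` of
characteristic `0`.  Inside `S(g ⊕ g) ≅ S(g) ⊗ S(g)`, one has
`Ker(d⊗id) ∩ Ker(id⊗d) = g ⊗ g ⊂ S²(g ⊕ g)`; in particular, this intersection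
meets the homogeneous component `S^m(g ⊕ g)` trivially for every `m ≥ 3`. -/
theorem ker_dTensorId_inf_ker_idTensorD
    (K : Type*) [Field K] [CharZero K] (n : ℕ) :
    LinearMap.ker (dTensorId K n) ⊓ LinearMap.ker (idTensorD K n) = gTensorG K n ∧
    ∀ m : ℕ, 3 ≤ m →
      (LinearMap.ker (dTensorId K n) ⊓ LinearMap.ker (idTensorD K n)) ⊓
        degreeComponent2 K n m = ⊥ := by
  have hmain : LinearMap.ker (dTensorId K n) ⊓ LinearMap.ker (idTensorD K n)
      = gTensorG K n := by
    rw [ker_dTensorId_eq, ker_idTensorD_eq, span_range_X_eq, top_eq_span_basis,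
      map₂_span_basis, map₂_span_basis, basis_span_inf]
    rw [gTensorG, span_range_X_eq, map₂_span_basis]
    congr 1
    rw [Set.prod_inter_prod, Set.inter_univ, Set.univ_inter]
  refine ⟨hmain, fun m hm => ?_⟩
  rw [hmain, eq_bot_iff]
  have hg : gTensorG K n = Submodule.span K
      (((basisMonomials (Fin n) K).tensorProduct (basisMonomials (Fin n) K)) ''
        (singleSet n ×ˢ singleSet n)) := by
    rw [gTensorG, span_range_X_eq, map₂_span_basis]
  rw [hg]
  refine le_trans (inf_le_inf_left _ (degreeComponent2_le_span K n m)) ?_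
  rw [basis_span_inf]
  have hempty : (singleSet n ×ˢ singleSet n)
      ∩ {p : (Fin n →₀ ℕ) × (Fin n →₀ ℕ) |
          Finsupp.weight (1 : Fin n → ℕ) p.1 + Finsupp.weight (1 : Fin n → ℕ) p.2 = m}
      = ∅ := by
    ext ⟨u, v⟩
    simp only [Set.mem_inter_iff, Set.mem_prod, Set.mem_setOf_eq,
      Set.mem_empty_iff_false, iff_false, not_and]
    rintro ⟨⟨i, rfl⟩, ⟨j, rfl⟩⟩ h
    rw [weight_single_one, weight_single_one] at h
    omega
  rw [hempty, Set.image_empty, Submodule.span_empty]
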